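/- Let E be a normed additive group whose norm is ultrametric (‖x + y‖ ≤ max(‖x‖, ‖y‖) for all x, y), and let G be a group with identity element 1. Let R > 0 and let ψ : E → G be a map with ψ(0) = 1 which is injective on the closed ball B_R = {X ∈ E : ‖X‖ ≤ R}. Assume there are maps m : E × E → E and i : E → E and a radius 0 < R₁ ≤ R such that: (a) for all X, Y ∈ B_{R₁} one has ‖m(X,Y)‖ ≤ R, ψ(m(X,Y)) = ψ(X)·ψ(Y), ‖i(X)‖ ≤ R, and ψ(i(X)) = ψ(X)⁻¹; (b) for every ε > 0 there exists δ > 0 such that for all X, Y with ‖X‖ ≤ δ and ‖Y‖ ≤ δ one has ‖m(X,Y) − X − Y‖ ≤ ε · max(‖X‖, ‖Y‖) and ‖i(X) + X‖ ≤ ε · ‖X‖. Then there exists r₀ with 0 < r₀ ≤ R₁ such that for every r with 0 < r ≤ r₀, the image ψ(B_r) of the closed ball B_r = {X : ‖X‖ ≤ r} is a subgroup of G (it contains 1 and is closed under multiplication and inversion). If moreover G is a topological group, ψ restricted to B_R is a homeomorphism onto an open subset of G, and each closed ball B_r is compact and open in E, then ψ(B_r) is a compact open subgroup of G for all 0 <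 r ≤ r₀. -/

import Mathlib

/-- Lemma 10.1 (i) of the paper: for a map `ψ` from an ultrametric normed additive group
to a group `G`, sending `0` to `1`, injective on the ball of radius `R`, and carrying a
first-order-compatible multiplication `m` and inversion `i` in the chart, the images of
all sufficiently small closed balls are subgroups of `G`; moreover if `G` is a
topological group, `ψ` is a homeomorphism of the `R`-ball onto an open subset of `G`,
and the closed balls are compact and open, these images are compact open subgroups. -/
theorem stmt5 {E : Type*} [NormedAddCommGroup E]
    (hultra : ∀ x y : E, ‖x + y‖ ≤ max ‖x‖ ‖y‖)
    {G : Type*} [Group G] [TopologicalSpace G] [IsTopologicalGroup G]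
    (R : ℝ) (hR : 0 < R) (ψ : E → G) (hψ0 : ψ 0 = 1)
    (hinj : Set.InjOn ψ {X : E | ‖X‖ ≤ R})
    (m : E × E → E) (i : E → E) (R₁ : ℝ) (hR₁ : 0 < R₁) (hR₁R : R₁ ≤ R)
    (hm : ∀ X Y : E, ‖X‖ ≤ R₁ → ‖Y‖ ≤ R₁ →
      ‖m (X, Y)‖ ≤ R ∧ ψ (m (X, Y)) = ψ X * ψ Y)
    (hi : ∀ X : E, ‖X‖ ≤ R₁ → ‖i X‖ ≤ R ∧ ψ (i X) = (ψ X)⁻¹)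
    (happrox : ∀ ε : ℝ, 0 < ε → ∃ δ : ℝ, 0 < δ ∧ ∀ X Y : E, ‖X‖ ≤ δ → ‖Y‖ ≤ δ →
      ‖m (X, Y) - X - Y‖ ≤ ε * max ‖X‖ ‖Y‖ ∧ ‖i X + X‖ ≤ ε * ‖X‖) :
    ∃ r₀ : ℝ, 0 < r₀ ∧ r₀ ≤ R₁ ∧ ∀ r : ℝ, 0 < r → r ≤ r₀ →
      (((1 : G) ∈ ψ '' {X : E | ‖X‖ ≤ r} ∧
        (∀ a ∈ ψ '' {X : E | ‖X‖ ≤ r}, ∀ b ∈ ψ '' {X : E | ‖X‖ ≤ r},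
          a * b ∈ ψ '' {X : E | ‖X‖ ≤ r}) ∧
        (∀ a ∈ ψ '' {X : E | ‖X‖ ≤ r}, a⁻¹ ∈ ψ '' {X : E | ‖X‖ ≤ r})) ∧
      (Topology.IsOpenEmbedding (Set.restrict {X : E | ‖X‖ ≤ R} ψ) →
       (∀ r' : ℝ, 0 < r' → IsCompact {X : E | ‖X‖ ≤ r'} ∧ IsOpen {X : E | ‖X‖ ≤ r'}) →
       IsCompact (ψ '' {X : E | ‖X‖ ≤ r}) ∧ IsOpen (ψ '' {X : E | ‖X‖ ≤ r}))) := by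
  obtain ⟨δ, hδ, hδ1⟩ := happrox 1 one_pos
  refine ⟨min δ R₁, lt_min hδ hR₁, min_le_right _ _, fun r hr hrr₀ => ?_⟩
  have hrδ : r ≤ δ := hrr₀.trans (min_le_left _ _)
  have hrR₁ : r ≤ R₁ := hrr₀.trans (min_le_right _ _)
  have hrR : r ≤ R := hrR₁.trans hR₁R
  constructor
  · refine ⟨⟨0, by simpa using hr.le, hψ0⟩, ?_, ?_⟩
    · rintro a ⟨X, hX, rfl⟩ b ⟨Y, hY, rfl⟩
      have hX' : ‖X‖ ≤ r := hX
      have hY' : ‖Y‖ ≤ r := hY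
      obtain ⟨h1, -⟩ := hδ1 X Y (hX'.trans hrδ) (hY'.trans hrδ)
      have hmul := (hm X Y (hX'.trans hrR₁) (hY'.trans hrR₁)).2
      refine ⟨m (X, Y), ?_, hmul⟩
      have hu := hultra (m (X, Y) - (X + Y)) (X + Y)
      rw [sub_add_cancel] at hu
      calc ‖m (X, Y)‖ ≤ max ‖m (X, Y) - (X + Y)‖ ‖X + Y‖ := hu
        _ ≤ r := by
            have h2 : ‖X + Y‖ ≤ r := (hultra X Y).trans (max_le hX' hY')
            have h3 : ‖m (X, Y) - (X + Y)‖ ≤ r := by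
              rw [← sub_sub]
              calc ‖m (X, Y) - X - Y‖ ≤ 1 * max ‖X‖ ‖Y‖ := h1
                _ = max ‖X‖ ‖Y‖ := one_mul _
                _ ≤ r := max_le hX' hY'
            exact max_le h3 h2
    · rintro a ⟨X, hX, rfl⟩
      have hX' : ‖X‖ ≤ r := hX
      obtain ⟨-, h1⟩ := hδ1 X X (hX'.trans hrδ) (hX'.trans hrδ)
      refine ⟨i X, ?_, (hi X (hX'.trans hrR₁)).2⟩
      have hu := hultra (i X + X) (-X)
      rw [add_neg_cancel_right] at hu
      calc ‖i X‖ ≤ max ‖i X + X‖ ‖(-X : E)‖ := hu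
        _ ≤ r := by
            rw [norm_neg]
            exact max_le (h1.trans (by simpa using hX')) hX'
  · intro hemb hball
    have hsub : {X : E | ‖X‖ ≤ r} ⊆ {X : E | ‖X‖ ≤ R} := fun X hX => le_trans hX hrR
    have hcont : ContinuousOn ψ {X : E | ‖X‖ ≤ r} :=
      (continuousOn_iff_continuous_restrict.mpr hemb.continuous).mono hsub
    refine ⟨(hball r hr).1.image_of_continuousOn hcont, ?_⟩
    have himg : ψ '' {X : E | ‖X‖ ≤ r} =
        Set.restrict {X : E | ‖X‖ ≤ R} ψ '' (Subtype.val ⁻¹' {X : E | ‖X‖ ≤ r}) := by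
      rw [show Set.restrict {X : E | ‖X‖ ≤ R} ψ = Set.domRestrict {X : E | ‖X‖ ≤ R} ψ from rfl,
        Set.image_domRestrict, Set.inter_eq_left.mpr hsub]
    rw [himg]
    exact hemb.isOpenMap _ ((hball r hr).2.preimage continuous_subtype_val)
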